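/- There exists d₀ (depending only on ε) such that for all d ≥ d₀, in the setting of the wasteful random colouring procedure with activation probability p, every vertex v ∈ V(G) satisfies P[Ω*_v] ≤ 16·e³·d⁵·(e/log d)^{(log d)² − 3}. -/

import Mathlib

open Finset
open scoped Classical

/-- An outcome of the wasteful random colouring procedure: an activation function
`A : V → Bool` and a colouring `ψ : V → W`. -/
abbrev Samp (V W : Type) : Type := (V → Bool) × (V → W)

/-- `H` is a cover graph for `G` via `L`. -/
def IsCoverGraph {V W : Type} (G : SimpleGraph V) (H : SimpleGraph W)
    (L : V → Finset W) : Prop :=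
  (∀ v v' : V, v ≠ v' → Disjoint (L v) (L v')) ∧
  (∀ w : W, ∃ v : V, w ∈ L v) ∧
  (∀ v v' : V, ¬ G.Adj v v' → ∀ c ∈ L v, ∀ c' ∈ L v', ¬ H.Adj c c')

/-- The probability weight of an outcome `ω`: each vertex is activated
independently with probability `p`, and each vertex receives an independent
uniformly random colour from its list. -/
noncomputable def wt {V W : Type} [Fintype V] (L : V → Finset W) (p : ℝ)
    (ω : Samp V W) : ℝ :=
  (∏ v : V, if ω.1 v then p else 1 - p) *
    ∏ v : V, if ω.2 v ∈ L v then (1 : ℝ) / (L v).card else 0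

/-- Probability of an event under the wasteful random colouring procedure. -/
noncomputable def prE {V W : Type} [Fintype V] [Fintype W] [DecidableEq V]
    (L : V → Finset W) (p : ℝ) (E : Samp V W → Prop) : ℝ :=
  ∑ ω : Samp V W, if E ω then wt L p ω else 0

/-- Expectation of a random variable under the wasteful random colouring
procedure. -/
noncomputable def ex {V W : Type} [Fintype V] [Fintype W] [DecidableEq V]
    (L : V → Finset W) (p : ℝ) (X : Samp V W → ℝ) : ℝ :=
  ∑ ω : Samp V W, wt L p ω * X ω

/-- The number of `φ`-useable colours in `L v`, where `φ = ψ|_A`: colours `c ∈ L v`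
such that no activated vertex got a colour `H`-adjacent to `c`. -/
noncomputable def useableCols {V W : Type} [Fintype V] (H : SimpleGraph W)
    (L : V → Finset W) (v : V) (ω : Samp V W) : ℕ :=
  ((L v).filter (fun c => ∀ u : V, ω.1 u = true → ¬ H.Adj c (ω.2 u))).card

/-- `A^col`: activated vertices `v` such that no activated `G`-neighbour received a
colour `H`-adjacent to the colour of `v`. -/
noncomputable def Acol {V W : Type} [Fintype V] (G : SimpleGraph V)
    (H : SimpleGraph W) (ω : Samp V W) : Finset V :=
  Finset.univ.filter (fun v => ω.1 v = true ∧
    ∀ u : V, G.Adj v u → ω.1 u = true → ¬ H.Adj (ω.2 u) (ω.2 v))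

/-- `#coloured_nbrs_{v,c}`: the number of `H`-neighbours of `c` lying in the list
of some vertex of `A^col`. -/
noncomputable def colouredNbrs {V W : Type} [Fintype V] [Fintype W]
    (G : SimpleGraph V) (H : SimpleGraph W) (L : V → Finset W) (c : W)
    (ω : Samp V W) : ℕ :=
  ((Finset.univ.filter (fun c' : W => H.Adj c c')).filter
    (fun c' => ∃ u ∈ Acol G H ω, c' ∈ L u)).card

/-- `#conflicts_{u,c}`: the number of activated `G`-neighbours `w` of `u` whose
colour is `H`-adjacent to `c`. -/
noncomputable def conflicts {V W : Type} [Fintype V] (G : SimpleGraph V)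
    (H : SimpleGraph W) (u : V) (c : W) (ω : Samp V W) : ℕ :=
  (Finset.univ.filter
    (fun x : V => G.Adj u x ∧ ω.1 x = true ∧ H.Adj c (ω.2 x))).card

section Helpers

variable {V W : Type} [Fintype V] [Fintype W] [DecidableEq V]

lemma sum_fn_prod {β : Type} [Fintype β] (g : V → β → ℝ) :
    ∑ f : V → β, ∏ v, g v (f v) = ∏ v, ∑ b : β, g v b := by
  classical
  calc ∑ f : V → β, ∏ v, g v (f v)
      = ∑ f ∈ Fintype.piFinset (fun _ : V => (univ : Finset β)), ∏ v, g v (f v) := by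
        rw [Fintype.piFinset_univ]
    _ = ∏ v, ∑ b : β, g v b := (Finset.prod_univ_sum _ _).symm

lemma sum_samp_prod (F : V → Bool → W → ℝ) :
    ∑ ω : Samp V W, ∏ v, F v (ω.1 v) (ω.2 v) = ∏ v, ∑ b : Bool, ∑ w : W, F v b w := by
  rw [Fintype.sum_prod_type]
  have h1 : ∀ a : V → Bool, ∑ ψ : V → W, ∏ v, F v (a v) (ψ v)
      = ∏ v, ∑ w : W, F v (a v) w := fun a => sum_fn_prod (fun v w => F v (a v) w)
  rw [Finset.sum_congr rfl fun a _ => h1 a]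
  exact sum_fn_prod (fun v b => ∑ w : W, F v b w)

lemma wt_nonneg (L : V → Finset W) {p : ℝ} (hp0 : 0 ≤ p) (hp1 : p ≤ 1) (ω : Samp V W) :
    0 ≤ wt L p ω := by
  refine mul_nonneg (Finset.prod_nonneg fun v _ => ?_) (Finset.prod_nonneg fun v _ => ?_)
  · split <;> linarith
  · split <;> positivity

lemma prE_congr (L : V → Finset W) (p : ℝ) {E E' : Samp V W → Prop}
    (h : ∀ ω, E ω ↔ E' ω) : prE L p E = prE L p E' :=
  Finset.sum_congr rfl fun ω _ => by rw [if_congr (h ω) rfl rfl]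

lemma prE_le_sum {ι : Type} (L : V → Finset W) {p : ℝ} (hp0 : 0 ≤ p) (hp1 : p ≤ 1)
    (s : Finset ι) (E : ι → Samp V W → Prop) :
    prE L p (fun ω => ∃ i ∈ s, E i ω) ≤ ∑ i ∈ s, prE L p (E i) := by
  unfold prE
  rw [Finset.sum_comm]
  apply Finset.sum_le_sum
  intro ω _
  have nn : ∀ j : ι, 0 ≤ (if E j ω then wt L p ω else 0) := by
    intro j; split; exacts [wt_nonneg L hp0 hp1 ω, le_rfl]
  split
  · next h =>
      obtain ⟨i, hi, hE⟩ := h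
      have h1 : wt L p ω = if E i ω then wt L p ω else 0 := by rw [if_pos hE]
      exact h1.le.trans (Finset.single_le_sum
        (f := fun j => if E j ω then wt L p ω else 0) (fun j _ => nn j) hi)
  · next h =>
      exact Finset.sum_nonneg fun j _ => nn j

lemma sum_filter_le_deg (H : SimpleGraph W) [DecidableRel H.Adj] (L : V → Finset W)
    (hdisj : ∀ v v' : V, v ≠ v' → Disjoint (L v) (L v')) (nb : Finset V) (c : W) :
    ∑ x ∈ nb, ((L x).filter (fun c' => H.Adj c c')).card ≤ H.degree c := by
  classical
  have hd : ∀ x ∈ nb, ∀ y ∈ nb, x ≠ y →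
      Disjoint ((L x).filter (fun c' => H.Adj c c')) ((L y).filter (fun c' => H.Adj c c')) :=
    fun x _ y _ hxy => Finset.disjoint_filter_filter (hdisj x y hxy)
  calc ∑ x ∈ nb, ((L x).filter (fun c' => H.Adj c c')).card
      = (nb.biUnion fun x => (L x).filter (fun c' => H.Adj c c')).card :=
        (Finset.card_biUnion hd).symm
    _ ≤ (H.neighborFinset c).card := Finset.card_le_card (by
        intro w hw
        rw [Finset.mem_biUnion] at hw
        obtain ⟨x, _, hw⟩ := hw
        rw [Finset.mem_filter] at hw
        rw [SimpleGraph.mem_neighborFinset]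
        exact hw.2)
    _ = H.degree c := rfl

lemma degG_le (G : SimpleGraph V) (H : SimpleGraph W) [DecidableRel H.Adj]
    (L : V → Finset W) (hdisj : ∀ v v' : V, v ≠ v' → Disjoint (L v) (L v'))
    (hedge : ∀ v v' : V, G.Adj v v' → ∃ c ∈ L v, ∃ c' ∈ L v', H.Adj c c') (u : V) :
    G.degree u ≤ ∑ c ∈ L u, H.degree c := by
  classical
  have hch : ∀ x : {x // x ∈ G.neighborFinset u},
      ∃ q : W × W, q.1 ∈ L u ∧ q.2 ∈ L x.1 ∧ H.Adj q.1 q.2 := by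
    intro x
    obtain ⟨cc, hc, c', hc', hadj⟩ := hedge u x.1
      (by have := x.2; rwa [SimpleGraph.mem_neighborFinset] at this)
    exact ⟨(cc, c'), hc, hc', hadj⟩
  choose f hf1 hf2 hf3 using hch
  have key : (G.neighborFinset u).attach.card ≤
      ((L u).sigma fun cc => H.neighborFinset cc).card := by
    apply Finset.card_le_card_of_injOn (fun x => (⟨(f x).1, (f x).2⟩ : Σ _ : W, W))
    · intro x _
      rw [Finset.mem_coe, Finset.mem_sigma]
      exact ⟨hf1 x, by rw [SimpleGraph.mem_neighborFinset]; exact hf3 x⟩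
    · intro x _ y _ hxy
      have h2 : (f x).2 = (f y).2 := congrArg (fun q : Σ _ : W, W => q.2) hxy
      by_contra hne
      have hxy1 : x.1 ≠ y.1 := fun h => hne (Subtype.ext h)
      exact Finset.disjoint_left.mp (hdisj x.1 y.1 hxy1) (hf2 x) (h2 ▸ hf2 y)
  rw [Finset.card_attach, SimpleGraph.card_neighborFinset_eq_degree,
    Finset.card_sigma] at key
  exact key

lemma tail_bound (G : SimpleGraph V) (H : SimpleGraph W) [DecidableRel H.Adj]
    (L : V → Finset W) {p : ℝ} (hp0 : 0 ≤ p) (hp1 : p ≤ 1)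
    {Λ : ℕ} (hΛ : 0 < Λ) (hL : ∀ v, (L v).card = Λ)
    (u : V) (c : W) {r : ℝ} (hr : 1 ≤ r) (s : ℝ) :
    prE L p (fun ω => s ≤ (conflicts G H u c ω : ℝ)) ≤
      Real.exp ((r - 1) * (p / Λ * ∑ x ∈ G.neighborFinset u,
        (((L x).filter (fun c' => H.Adj c c')).card : ℝ))) * r ^ (-s) := by
  have hr0 : (0:ℝ) < r := lt_of_lt_of_le one_pos hr
  have hΛR : (0:ℝ) < (Λ:ℝ) := by exact_mod_cast hΛ
  set F : V → Bool → W → ℝ := fun x b w =>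
    ((if b then p else 1 - p) * (if w ∈ L x then (1:ℝ)/(L x).card else 0)) *
    (if G.Adj u x ∧ b = true ∧ H.Adj c w then r else 1) with hF
  have hpoint : ∀ ω : Samp V W,
      (if s ≤ (conflicts G H u c ω : ℝ) then wt L p ω else 0) ≤
        (wt L p ω * r ^ (conflicts G H u c ω)) * r ^ (-s) := by
    intro ω
    have hw := wt_nonneg L hp0 hp1 ω
    have hrs : (0:ℝ) ≤ r ^ (-s) := Real.rpow_nonneg hr0.le (-s)
    split
    · next h =>
        have h2 : r ^ ((conflicts G H u c ω : ℝ) - s) =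
            r ^ (conflicts G H u c ω) * r ^ (-s) := by
          rw [sub_eq_add_neg, Real.rpow_add hr0, Real.rpow_natCast]
        have h1 : (1:ℝ) ≤ r ^ (conflicts G H u c ω) * r ^ (-s) := by
          rw [← h2]
          calc (1:ℝ) = r ^ (0:ℝ) := (Real.rpow_zero r).symm
            _ ≤ _ := Real.rpow_le_rpow_of_exponent_le hr (by linarith)
        nlinarith
    · next h =>
        exact mul_nonneg (mul_nonneg hw (pow_nonneg hr0.le _)) hrs
  have hprod : ∀ ω : Samp V W,
      wt L p ω * r ^ (conflicts G H u c ω) = ∏ x, F x (ω.1 x) (ω.2 x) := by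
    intro ω
    have hX : (r:ℝ) ^ (conflicts G H u c ω) =
        ∏ x, (if G.Adj u x ∧ ω.1 x = true ∧ H.Adj c (ω.2 x) then r else 1) := by
      unfold conflicts
      rw [← Finset.prod_const r, Finset.prod_filter]
      exact Finset.prod_congr rfl fun x _ => by congr
    rw [wt, hX, hF]
    rw [← Finset.prod_mul_distrib, ← Finset.prod_mul_distrib]
  have hcoord : ∀ x : V, (∑ b : Bool, ∑ w : W, F x b w) =
      if G.Adj u x then
        1 + (r - 1) * (p / Λ * (((L x).filter (fun c' => H.Adj c c')).card : ℝ))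
      else 1 := by
    intro x
    have hcard := hL x
    have hw1 : ∑ w : W, (if w ∈ L x then (1:ℝ)/(L x).card else 0) = 1 := by
      have hc' : ∀ w : W, (if w ∈ L x then (1:ℝ)/(L x).card else 0)
          = (if w ∈ L x then (1:ℝ)/Λ else 0) := by intro w; rw [hcard]
      rw [Finset.sum_congr rfl fun w _ => hc' w]
      rw [Fintype.sum_ite_mem, Finset.sum_const, hcard, nsmul_eq_mul]
      field_simp
    rw [Fintype.sum_bool]
    have hfalse : ∑ w : W, F x false w = 1 - p := by
      have hc' : ∀ w : W, F x false w
          = (1 - p) * (if w ∈ L x then (1:ℝ)/(L x).card else 0) := by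
        intro w; simp [hF]
      rw [Finset.sum_congr rfl fun w _ => hc' w, ← Finset.mul_sum, hw1, mul_one]
    have htrue : ∑ w : W, F x true w =
        if G.Adj u x then
          p * ((1:ℝ)/Λ * ((((L x).filter (fun c' => H.Adj c c')).card : ℝ) * r
            + ((Λ:ℝ) - (((L x).filter (fun c' => H.Adj c c')).card : ℝ))))
        else p := by
      by_cases hadj : G.Adj u x
      · rw [if_pos hadj]
        have hc' : ∀ w : W, F x true w
            = p * (if w ∈ L x then (1:ℝ)/Λ * (if H.Adj c w then r else 1) else 0) := by
          intro w
          by_cases hm : w ∈ L x <;> by_cases ha : H.Adj c w <;>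
            simp [hF, hm, ha, hadj, hcard] <;> ring
        rw [Finset.sum_congr rfl fun w _ => hc' w]
        rw [← Finset.mul_sum, Fintype.sum_ite_mem, ← Finset.mul_sum, Finset.sum_ite,
          Finset.sum_const, Finset.sum_const]
        have hmm := Finset.card_filter_add_card_filter_not
          (s := L x) (p := fun w => H.Adj c w)
        rw [hcard] at hmm
        have hmm' := congrArg (Nat.cast : ℕ → ℝ) hmm
        push_cast at hmm'
        rw [nsmul_eq_mul, nsmul_eq_mul, mul_one]
        have hm2 : (((L x).filter (fun w => ¬ H.Adj c w)).card : ℝ)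
            = (Λ:ℝ) - (((L x).filter (fun c' => H.Adj c c')).card : ℝ) := by
          linarith
        rw [hm2]
      · rw [if_neg hadj]
        have hc' : ∀ w : W, F x true w
            = p * (if w ∈ L x then (1:ℝ)/(L x).card else 0) := by
          intro w; simp [hF, hadj]
        rw [Finset.sum_congr rfl fun w _ => hc' w, ← Finset.mul_sum, hw1, mul_one]
    rw [hfalse, htrue]
    by_cases hadj : G.Adj u x
    · rw [if_pos hadj, if_pos hadj]
      field_simp
      ring
    · rw [if_neg hadj, if_neg hadj]; ring
  have hmain : (∏ x : V, ∑ b : Bool, ∑ w : W, F x b w) ≤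
      Real.exp ((r - 1) * (p / Λ * ∑ x ∈ G.neighborFinset u,
        (((L x).filter (fun c' => H.Adj c c')).card : ℝ))) := by
    rw [Finset.prod_congr rfl fun x _ => hcoord x]
    have e1 : (∏ x : V, if G.Adj u x then
        1 + (r - 1) * (p / Λ * (((L x).filter (fun c' => H.Adj c c')).card : ℝ))
        else 1) = ∏ x ∈ G.neighborFinset u,
        (1 + (r - 1) * (p / Λ * (((L x).filter (fun c' => H.Adj c c')).card : ℝ))) := by
      rw [SimpleGraph.neighborFinset_eq_filter, Finset.prod_filter]
    rw [e1]
    have nn : ∀ x : V, 0 ≤ (r - 1) * (p / Λ * (((L x).filter (fun c' => H.Adj c c')).card : ℝ)) :=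
      fun x => mul_nonneg (by linarith)
        (mul_nonneg (div_nonneg hp0 hΛR.le) (Nat.cast_nonneg _))
    calc ∏ x ∈ G.neighborFinset u,
          (1 + (r - 1) * (p / Λ * (((L x).filter (fun c' => H.Adj c c')).card : ℝ)))
        ≤ ∏ x ∈ G.neighborFinset u, Real.exp
          ((r - 1) * (p / Λ * (((L x).filter (fun c' => H.Adj c c')).card : ℝ))) :=
          Finset.prod_le_prod (fun x _ => by linarith [nn x])
            (fun x _ => by rw [add_comm]; exact Real.add_one_le_exp _)
      _ = Real.exp (∑ x ∈ G.neighborFinset u,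
          (r - 1) * (p / Λ * (((L x).filter (fun c' => H.Adj c c')).card : ℝ))) :=
          (Real.exp_sum _ _).symm
      _ = Real.exp ((r - 1) * (p / Λ * ∑ x ∈ G.neighborFinset u,
          (((L x).filter (fun c' => H.Adj c c')).card : ℝ))) := by
          rw [← Finset.mul_sum, ← Finset.mul_sum]
  calc prE L p (fun ω => s ≤ (conflicts G H u c ω : ℝ))
      ≤ ∑ ω : Samp V W, (wt L p ω * r ^ (conflicts G H u c ω)) * r ^ (-s) :=
        Finset.sum_le_sum fun ω _ => hpoint ω
    _ = (∑ ω : Samp V W, ∏ x, F x (ω.1 x) (ω.2 x)) * r ^ (-s) := by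
        rw [← Finset.sum_mul]
        congr 1
        exact Finset.sum_congr rfl fun ω _ => hprod ω
    _ = (∏ x : V, ∑ b : Bool, ∑ w : W, F x b w) * r ^ (-s) := by
        rw [sum_samp_prod]
    _ ≤ _ := mul_le_mul_of_nonneg_right hmain (Real.rpow_nonneg hr0.le _)

end Helpers

set_option maxHeartbeats 1000000 in
/-- Probability of the exceptional event `Ω*_v`: for `d` sufficiently large
(depending only on `ε`), the probability that some vertex `u` at `G`-distance at
most `2` from `v` has a colour `c ∈ L(u)` with `#conflicts_{u,c} ≥ (log d)²` is at
most `16·e³·d⁵·(e/log d)^{(log d)² − 3}`. -/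
theorem exceptional_event_prob (ε : ℝ) (hε : 0 < ε) :
    ∃ d₀ : ℝ, ∀ d : ℝ, d₀ ≤ d → 1 ≤ d →
      ∀ (V W : Type) [Fintype V] [Fintype W] [DecidableEq V] [DecidableEq W]
        (Λ : ℕ), (1 + ε) * d ≤ (Λ : ℝ) → (Λ : ℝ) ≤ 4 * d + 1 →
      ∀ (p : ℝ), 1 / (Real.log d) ^ 2 ≤ p → p ≤ 1 / Real.log d →
      ∀ (G : SimpleGraph V) (H : SimpleGraph W) [DecidableRel H.Adj]
        (L : V → Finset W),
        IsCoverGraph G H L →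
        (∀ v : V, (L v).card = Λ) →
        (∀ v : V, ∑ c ∈ L v, (H.degree c : ℝ) ≤ d * Λ) →
        (∀ c : W, (H.degree c : ℝ) ≤ d * Real.log d) →
        (∀ v v' : V, G.Adj v v' → ∀ c ∈ L v,
          (((L v').filter (fun c' => H.Adj c c')).card : ℝ) ≤ d ^ ((1 : ℝ) / 4)) →
        (∀ v v' : V, G.Adj v v' → ∃ c ∈ L v, ∃ c' ∈ L v', H.Adj c c') →
        ∀ v : V,
        prE L p (fun ω => ∃ u : V,
            (u = v ∨ G.Adj v u ∨ ∃ x : V, G.Adj v x ∧ G.Adj x u) ∧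
            ∃ c ∈ L u, (Real.log d) ^ 2 ≤ (conflicts G H u c ω : ℝ))
          ≤ 16 * Real.exp 1 ^ 3 * d ^ 5 *
              (Real.exp 1 / Real.log d) ^ ((Real.log d) ^ 2 - 3) := by
  refine ⟨Real.exp 2 + 9, fun d hd hd1 V W _ _ _ _ Λ hΛlow hΛhigh p hplow hphigh
    G H _ L cover hLcard havg hmaxdeg _hmu hedge v => ?_⟩
  have hd0 : (0:ℝ) < d := lt_of_lt_of_le one_pos hd1
  have he2 : Real.exp 2 ≤ d := by linarith
  have hlg2 : (2:ℝ) ≤ Real.log d := by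
    have h := Real.log_le_log (Real.exp_pos 2) he2
    rwa [Real.log_exp] at h
  have hlg0 : (0:ℝ) < Real.log d := by linarith
  have hd7 : (7:ℝ) ≤ d := by linarith [(Real.exp_pos 2).le]
  have hΛR : (0:ℝ) < (Λ:ℝ) := lt_of_lt_of_le (by nlinarith) hΛlow
  have hΛ0 : 0 < Λ := by exact_mod_cast hΛR
  have hp0 : 0 ≤ p := le_trans (by positivity) hplow
  have hp1 : p ≤ 1 := hphigh.trans (by rw [div_le_one hlg0]; linarith)
  set lg := Real.log d with hlgdef
  set B : Finset V := Finset.univ.filter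
    (fun u => u = v ∨ G.Adj v u ∨ ∃ x : V, G.Adj v x ∧ G.Adj x u) with hB
  -- per-pair tail bound
  have hpair : ∀ u : V, ∀ c : W,
      prE L p (fun ω => lg ^ 2 ≤ (conflicts G H u c ω : ℝ)) ≤ d * lg ^ (-(lg ^ 2)) := by
    intro u c
    have htail := tail_bound G H L hp0 hp1 hΛ0 hLcard u c (r := lg) (by linarith) (lg ^ 2)
    refine htail.trans ?_
    set S := ∑ x ∈ G.neighborFinset u, (((L x).filter (fun c' => H.Adj c c')).card : ℝ)
      with hSdef
    have hS0 : (0:ℝ) ≤ S := Finset.sum_nonneg fun x _ => Nat.cast_nonneg _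
    have hSle : S ≤ d * lg := by
      have h1 := sum_filter_le_deg H L cover.1 (G.neighborFinset u) c
      have h2 : ((∑ x ∈ G.neighborFinset u,
          ((L x).filter (fun c' => H.Adj c c')).card : ℕ) : ℝ) ≤ (H.degree c : ℝ) :=
        Nat.cast_le.mpr h1
      push_cast at h2
      exact h2.trans (hmaxdeg c)
    have hpS : p * S ≤ d := by
      calc p * S ≤ (1 / lg) * (d * lg) :=
            mul_le_mul hphigh hSle hS0 (by positivity)
        _ = d := by field_simp
    have hμ : p / Λ * S ≤ 1 := by
      rw [div_mul_eq_mul_div, div_le_one hΛR]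
      nlinarith
    have hμ0 : 0 ≤ p / Λ * S := mul_nonneg (div_nonneg hp0 hΛR.le) hS0
    have harg : (lg - 1) * (p / Λ * S) ≤ lg := by nlinarith
    have hexp : Real.exp ((lg - 1) * (p / Λ * S)) ≤ d := by
      calc Real.exp ((lg - 1) * (p / Λ * S)) ≤ Real.exp lg := Real.exp_le_exp.mpr harg
        _ = d := Real.exp_log hd0
    exact mul_le_mul_of_nonneg_right hexp (Real.rpow_nonneg hlg0.le _)
  -- degree bound
  have hdeg : ∀ u : V, (G.degree u : ℝ) ≤ 5 * d ^ 2 := by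
    intro u
    have h1 := degG_le G H L cover.1 hedge u
    have h2 : ((G.degree u : ℕ) : ℝ) ≤ ((∑ c ∈ L u, H.degree c : ℕ) : ℝ) :=
      Nat.cast_le.mpr h1
    push_cast at h2
    calc (G.degree u : ℝ) ≤ ∑ c ∈ L u, (H.degree c : ℝ) := h2
      _ ≤ d * Λ := havg u
      _ ≤ 5 * d ^ 2 := by nlinarith
  -- ball size
  have hBcard : (B.card : ℝ) ≤ 1 + 5 * d ^ 2 + (5 * d ^ 2) * (5 * d ^ 2) := by
    have hsub : B ⊆ insert v ((G.neighborFinset v) ∪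
        (G.neighborFinset v).biUnion (fun x => G.neighborFinset x)) := by
      intro u hu
      rw [hB, Finset.mem_filter] at hu
      rcases hu.2 with rfl | h | ⟨x, hx, hxu⟩
      · exact Finset.mem_insert_self _ _
      · exact Finset.mem_insert_of_mem (Finset.mem_union_left _
          (by rwa [SimpleGraph.mem_neighborFinset]))
      · exact Finset.mem_insert_of_mem (Finset.mem_union_right _
          (Finset.mem_biUnion.mpr ⟨x, by rwa [SimpleGraph.mem_neighborFinset],
            by rwa [SimpleGraph.mem_neighborFinset]⟩))
    have h1 : B.card ≤ 1 + G.degree v + ∑ x ∈ G.neighborFinset v, G.degree x := by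
      have c1 := Finset.card_le_card hsub
      have c2 := Finset.card_insert_le v ((G.neighborFinset v) ∪
        (G.neighborFinset v).biUnion (fun x => G.neighborFinset x))
      have c3 := Finset.card_union_le (G.neighborFinset v)
        ((G.neighborFinset v).biUnion (fun x => G.neighborFinset x))
      have c4 := Finset.card_biUnion_le (s := G.neighborFinset v)
        (t := fun x => G.neighborFinset x)
      simp only [SimpleGraph.card_neighborFinset_eq_degree] at c3 c4
      omega
    have h1' : (B.card : ℝ) ≤ 1 + (G.degree v : ℝ)
        + ∑ x ∈ G.neighborFinset v, (G.degree x : ℝ) := by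
      have h := (Nat.cast_le (α := ℝ)).mpr h1
      push_cast at h
      exact h
    have h2 : (∑ x ∈ G.neighborFinset v, (G.degree x : ℝ)) ≤ (5 * d ^ 2) * (5 * d ^ 2) := by
      calc ∑ x ∈ G.neighborFinset v, (G.degree x : ℝ)
          ≤ ∑ _x ∈ G.neighborFinset v, 5 * d ^ 2 :=
            Finset.sum_le_sum fun x _ => hdeg x
        _ = (G.degree v : ℝ) * (5 * d ^ 2) := by
            rw [Finset.sum_const, SimpleGraph.card_neighborFinset_eq_degree, nsmul_eq_mul]
        _ ≤ (5 * d ^ 2) * (5 * d ^ 2) :=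
            mul_le_mul_of_nonneg_right (hdeg v) (by positivity)
    linarith [hdeg v]
  -- union bound chain
  refine le_trans (le_of_eq (prE_congr L p
    (E' := fun ω => ∃ i ∈ B.sigma (fun u => L u),
      lg ^ 2 ≤ (conflicts G H i.1 i.2 ω : ℝ)) ?_)) ?_
  · intro ω
    constructor
    · rintro ⟨u, hu, c, hc, hconf⟩
      exact ⟨⟨u, c⟩, Finset.mem_sigma.mpr
        ⟨Finset.mem_filter.mpr ⟨Finset.mem_univ _, hu⟩, hc⟩, hconf⟩
    · rintro ⟨⟨u, c⟩, hi, hconf⟩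
      rw [Finset.mem_sigma] at hi
      exact ⟨u, (Finset.mem_filter.mp hi.1).2, c, hi.2, hconf⟩
  refine le_trans (prE_le_sum L hp0 hp1 _ _) ?_
  have hchain : ∑ i ∈ B.sigma (fun u => L u),
      prE L p (fun ω => lg ^ 2 ≤ (conflicts G H i.1 i.2 ω : ℝ))
      ≤ (B.card : ℝ) * ((Λ : ℝ) * (d * lg ^ (-(lg ^ 2)))) := by
    rw [Finset.sum_sigma]
    calc ∑ u ∈ B, ∑ c ∈ L u, prE L p (fun ω => lg ^ 2 ≤ (conflicts G H u c ω : ℝ))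
        ≤ ∑ u ∈ B, ∑ _c ∈ L u, d * lg ^ (-(lg ^ 2)) :=
          Finset.sum_le_sum fun u _ => Finset.sum_le_sum fun c _ => hpair u c
      _ = ∑ _u ∈ B, (Λ : ℝ) * (d * lg ^ (-(lg ^ 2))) := by
          refine Finset.sum_congr rfl fun u _ => ?_
          rw [Finset.sum_const, hLcard u, nsmul_eq_mul]
      _ = (B.card : ℝ) * ((Λ : ℝ) * (d * lg ^ (-(lg ^ 2)))) := by
          rw [Finset.sum_const, nsmul_eq_mul]
  refine hchain.trans ?_
  -- final numeric comparison
  have hP0 : (0:ℝ) < lg ^ (lg ^ 2 : ℝ) := Real.rpow_pos_of_pos hlg0 _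
  have hexp2 : d ^ 2 ≤ Real.exp (lg ^ 2) := by
    have h1 : Real.exp (2 * lg) ≤ Real.exp (lg ^ 2) := Real.exp_le_exp.mpr (by nlinarith)
    have h2 : Real.exp (2 * lg) = d ^ 2 := by
      rw [show (2:ℝ) * lg = ((2:ℕ):ℝ) * lg by norm_num, Real.exp_nat_mul,
        Real.exp_log hd0]
    linarith
  have hrw : 16 * Real.exp 1 ^ 3 * d ^ 5 * (Real.exp 1 / lg) ^ (lg ^ 2 - 3) =
      (16 * d ^ 5 * (Real.exp (lg ^ 2) * lg ^ 3)) * (lg ^ (lg ^ 2 : ℝ))⁻¹ := by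
    have h3 : lg ^ (3:ℝ) = lg ^ (3:ℕ) := by
      rw [← Real.rpow_natCast lg 3]; norm_num
    rw [Real.div_rpow (Real.exp_pos 1).le hlg0.le, Real.exp_one_rpow,
      Real.rpow_sub hlg0, Real.exp_sub, h3, Real.exp_one_pow]
    field_simp
    ring
  rw [hrw, Real.rpow_neg hlg0.le]
  have hcoeff : (B.card : ℝ) * ((Λ : ℝ) * d) ≤ 16 * d ^ 5 * (Real.exp (lg ^ 2) * lg ^ 3) := by
    have hΛ5 : (Λ : ℝ) ≤ 5 * d := by linarith
    have e1 : d ^ 2 ≤ d ^ 6 := pow_le_pow_right₀ hd1 (by norm_num)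
    have e2 : d ^ 4 ≤ d ^ 6 := pow_le_pow_right₀ hd1 (by norm_num)
    have step1 : (B.card : ℝ) * ((Λ : ℝ) * d) ≤
        (1 + 5 * d ^ 2 + (5 * d ^ 2) * (5 * d ^ 2)) * (5 * d * d) := by
      apply mul_le_mul hBcard (by nlinarith) (by positivity) (by positivity)
    have step2 : ((1:ℝ) + 5 * d ^ 2 + (5 * d ^ 2) * (5 * d ^ 2)) * (5 * d * d)
        ≤ 155 * d ^ 6 := by nlinarith
    have step3 : (155:ℝ) * d ^ 6 ≤ 16 * d ^ 5 * (d ^ 2 * 8) := by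
      nlinarith [pow_nonneg hd0.le 6]
    have step4 : 16 * d ^ 5 * (d ^ 2 * 8) ≤ 16 * d ^ 5 * (Real.exp (lg ^ 2) * lg ^ 3) := by
      apply mul_le_mul_of_nonneg_left ?_ (by positivity)
      exact mul_le_mul hexp2 (by nlinarith) (by norm_num) (Real.exp_pos _).le
    linarith
  calc (B.card : ℝ) * ((Λ : ℝ) * (d * (lg ^ (lg ^ 2 : ℝ))⁻¹))
      = ((B.card : ℝ) * ((Λ : ℝ) * d)) * (lg ^ (lg ^ 2 : ℝ))⁻¹ := by ring
    _ ≤ _ := mul_le_mul_of_nonneg_right hcoeff (inv_nonneg.mpr hP0.le)
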